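/- Fix s ∈ [0,2) and R₁ > 0. For every n ≥ 0, the series Σ_{k : 2k+1 ≥ n} (πk)^(s/4) / ( R₁^k · (k + 1/2)^(s/2) · ((2k+1−n)!)^(1−s/2) ) converges; moreover, for any R₂ ∈ (0, √R₁) there exists a constant C > 0 (independent of n) such that this sum is bounded by C · R₂^(−n) · (n!)^(−s/2) · (n!)^(s/2) = C R₂^{−n}, i.e. the sum multiplied by (n!)^{s/2} is at most C (n!)^{s/2} R₂^{−n}. -/

import Mathlib

open Real Set Filter

/-- A sequence tending to zero is bounded above by some positive constant. -/
lemma aux_bdd_of_tendsto_zero {u : ℕ → ℝ} (h : Tendsto u atTop (nhds 0)) :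
    ∃ D : ℝ, 0 < D ∧ ∀ m, u m ≤ D := by
  obtain ⟨D₀, hD₀⟩ := h.bddAbove_range
  refine ⟨max D₀ 1, lt_of_lt_of_le one_pos (le_max_right _ _), fun m => ?_⟩
  exact le_trans (hD₀ ⟨m, rfl⟩) (le_max_left _ _)

/-- `c^m / (m!)^α → 0` for `α > 0`, `c ≥ 0`. -/
lemma aux_tendsto_pow_div_factorial_rpow {c α : ℝ} (hc : 0 ≤ c) (hα : 0 < α) :
    Tendsto (fun m : ℕ => c ^ m / (Nat.factorial m : ℝ) ^ α) atTop (nhds 0) := by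
  have hv : Tendsto (fun m : ℕ => (c ^ (1 / α)) ^ m / (Nat.factorial m : ℝ))
      atTop (nhds 0) := FloorSemiring.tendsto_pow_div_factorial_atTop _
  have hv' := hv.rpow_const (p := α) (Or.inr hα.le)
  rw [Real.zero_rpow hα.ne'] at hv'
  convert hv' using 2 with m
  have hb : (0 : ℝ) ≤ c ^ (1 / α) := Real.rpow_nonneg hc _
  have hfac : (0 : ℝ) < (Nat.factorial m : ℝ) := by positivity
  have hkey : ((c ^ (1 / α)) ^ m) ^ α = c ^ m := by
    rw [← Real.rpow_natCast (c ^ (1 / α)) m, ← Real.rpow_mul hc, ← Real.rpow_mul hc,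
      ← Real.rpow_natCast c m]
    congr 1
    field_simp
  rw [Real.div_rpow (by positivity) hfac.le, hkey]

theorem summability_estimate (s R₁ : ℝ) (hs0 : 0 ≤ s) (hs2 : s < 2) (hR₁ : 0 < R₁) :
    (∀ n : ℕ, Summable (fun k : ℕ =>
      if n ≤ 2 * k + 1 then
        (Real.pi * k) ^ (s / 4) /
          (R₁ ^ k * ((k : ℝ) + 1 / 2) ^ (s / 2) *
            (Nat.factorial (2 * k + 1 - n) : ℝ) ^ (1 - s / 2))
      else 0)) ∧
    ∀ R₂ : ℝ, 0 < R₂ → R₂ < Real.sqrt R₁ → ∃ C : ℝ, 0 < C ∧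
      ∀ n : ℕ,
        (∑' k : ℕ,
          if n ≤ 2 * k + 1 then
            (Real.pi * k) ^ (s / 4) /
              (R₁ ^ k * ((k : ℝ) + 1 / 2) ^ (s / 2) *
                (Nat.factorial (2 * k + 1 - n) : ℝ) ^ (1 - s / 2))
          else 0) ≤ C / R₂ ^ n := by
  set α := 1 - s / 2 with hαdef
  have hα : 0 < α := by simp only [hαdef]; linarith
  -- the generic term
  set f : ℕ → ℕ → ℝ := fun n k =>
      if n ≤ 2 * k + 1 then
        (Real.pi * k) ^ (s / 4) /
          (R₁ ^ k * ((k : ℝ) + 1 / 2) ^ (s / 2) *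
            (Nat.factorial (2 * k + 1 - n) : ℝ) ^ α)
      else 0 with hfdef
  have hf_nonneg : ∀ n k, 0 ≤ f n k := by
    intro n k
    simp only [hfdef]
    split_ifs
    · positivity
    · exact le_refl _
  -- numerator bound
  have hnum : ∀ k : ℕ, (Real.pi * k) ^ (s / 4) ≤ Real.pi * k + 1 := by
    intro k
    cases k with
    | zero =>
        simp only [Nat.cast_zero, mul_zero, zero_add]
        exact Real.zero_rpow_le_one _
    | succ j =>
        have h1 : (1 : ℝ) ≤ Real.pi * (j + 1 : ℕ) := by
          have : (1 : ℝ) ≤ (j + 1 : ℕ) := by exact_mod_cast Nat.one_le_iff_ne_zero.2 (Nat.succ_ne_zero j)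
          nlinarith [Real.pi_gt_three]
        calc (Real.pi * (j + 1 : ℕ)) ^ (s / 4)
            ≤ (Real.pi * (j + 1 : ℕ)) ^ (1 : ℝ) :=
              Real.rpow_le_rpow_of_exponent_le h1 (by linarith)
          _ = Real.pi * (j + 1 : ℕ) := Real.rpow_one _
          _ ≤ Real.pi * (j + 1 : ℕ) + 1 := by linarith
  -- core estimate: for any admissible R₂ get a geometric-type pointwise bound
  have core : ∀ R₂ : ℝ, 0 < R₂ → R₂ < Real.sqrt R₁ →
      ∃ K t : ℝ, 0 < K ∧ 0 < t ∧ t < 1 ∧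
        ∀ n k, f n k ≤ K * (R₂⁻¹) ^ n * t ^ k := by
    intro R₂ hR₂ hlt
    set q : ℝ := R₂ ^ 2 / R₁ with hqdef
    have hq0 : 0 < q := by positivity
    have hq1 : q < 1 := by
      have : R₂ ^ 2 < R₁ := (Real.lt_sqrt hR₂.le).1 hlt
      rw [hqdef, div_lt_one hR₁]; exact this
    set t : ℝ := Real.sqrt q with htdef
    have ht0 : 0 < t := Real.sqrt_pos.2 hq0
    have ht1 : t < 1 := by
      rw [htdef, show (1:ℝ) = Real.sqrt 1 by simp]
      exact Real.sqrt_lt_sqrt hq0.le hq1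
    have htt : t * t = q := Real.mul_self_sqrt hq0.le
    -- bound D for (R₂⁻¹)^m / (m!)^α
    obtain ⟨D, hD0, hD⟩ := aux_bdd_of_tendsto_zero
      (aux_tendsto_pow_div_factorial_rpow (inv_nonneg.2 hR₂.le) hα)
    -- bound Cq for (π*k+1) * t^k
    have hsum : Summable (fun k : ℕ => (Real.pi * k + 1) * t ^ k) := by
      have h1 : Summable (fun k : ℕ => (k : ℝ) ^ 1 * t ^ k) :=
        summable_pow_mul_geometric_of_norm_lt_one 1
          (by rw [Real.norm_eq_abs, abs_of_pos ht0]; exact ht1)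
      have h2 : Summable (fun k : ℕ => t ^ k) := summable_geometric_of_lt_one ht0.le ht1
      have := (h1.mul_left Real.pi).add h2
      convert this using 2 with k
      case e'_3 => rfl
      case e'_5 => ring
    obtain ⟨Cq, hCq0, hCq⟩ := aux_bdd_of_tendsto_zero hsum.tendsto_atTop_zero
    -- the constant
    set c₂ : ℝ := ((1:ℝ)/2) ^ (s/2) with hc₂def
    have hc₂0 : 0 < c₂ := by positivity
    refine ⟨Cq * D * R₂ / c₂, t, by positivity, ht0, ht1, ?_⟩
    intro n k
    simp only [hfdef]
    split_ifs with hn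
    · -- main case
      set m : ℕ := 2 * k + 1 - n with hmdef
      have hm : m + n = 2 * k + 1 := Nat.sub_add_cancel hn
      have hfac : (0:ℝ) < (Nat.factorial m : ℝ) := by positivity
      set F : ℝ := (Nat.factorial m : ℝ) ^ α with hFdef
      have hF0 : 0 < F := Real.rpow_pos_of_pos hfac _
      have hP : c₂ ≤ ((k : ℝ) + 1 / 2) ^ (s / 2) := by
        apply Real.rpow_le_rpow (by norm_num) _ (by linarith)
        have : (0:ℝ) ≤ (k:ℝ) := Nat.cast_nonneg k
        linarith
      have hstep1 : (Real.pi * k) ^ (s / 4) /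
            (R₁ ^ k * ((k : ℝ) + 1 / 2) ^ (s / 2) * F) ≤
          (Real.pi * k + 1) / (R₁ ^ k * c₂ * F) := by
        apply div_le_div₀ (by positivity) (hnum k) (by positivity)
        have h1 : (0:ℝ) < R₁ ^ k := by positivity
        gcongr
      refine hstep1.trans ?_
      -- rewrite the middle expression
      have hR1inv : (R₁ ^ k)⁻¹ = q ^ k * (R₂⁻¹) ^ (2 * k) := by
        have h1 : R₁⁻¹ = q * (R₂⁻¹) ^ 2 := by
          rw [hqdef]; field_simp
        rw [← inv_pow, h1, mul_pow, ← pow_mul]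
      have hkey : (R₂⁻¹) ^ (2 * k) = (R₂⁻¹) ^ m * (R₂⁻¹) ^ n * R₂ := by
        have h1 : (R₂⁻¹) ^ m * (R₂⁻¹) ^ n = (R₂⁻¹) ^ (2 * k) * R₂⁻¹ := by
          rw [← pow_add, hm, pow_succ]
        rw [h1, mul_assoc, inv_mul_cancel₀ hR₂.ne', mul_one]
      have heq : (Real.pi * k + 1) / (R₁ ^ k * c₂ * F) =
          ((Real.pi * k + 1) * q ^ k) * ((R₂⁻¹) ^ m / F) * (R₂⁻¹) ^ n * R₂ * c₂⁻¹ := by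
        rw [div_eq_mul_inv, mul_inv, mul_inv, hR1inv, hkey, div_eq_mul_inv]
        ring
      rw [heq]
      have hb1 : (Real.pi * k + 1) * q ^ k ≤ Cq * t ^ k := by
        have h1 : (Real.pi * k + 1) * t ^ k ≤ Cq := hCq k
        have h2 : (Real.pi * k + 1) * q ^ k = ((Real.pi * k + 1) * t ^ k) * t ^ k := by
          rw [← htt, mul_pow]; ring
        rw [h2]
        exact mul_le_mul_of_nonneg_right h1 (by positivity)
      have hb2 : (R₂⁻¹) ^ m / F ≤ D := hD m
      calc ((Real.pi * k + 1) * q ^ k) * ((R₂⁻¹) ^ m / F) * (R₂⁻¹) ^ n * R₂ * c₂⁻¹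
          ≤ (Cq * t ^ k) * D * (R₂⁻¹) ^ n * R₂ * c₂⁻¹ := by
            gcongr <;> positivity
        _ = Cq * D * R₂ / c₂ * (R₂⁻¹) ^ n * t ^ k := by
            rw [div_eq_mul_inv]; ring
    · positivity
  constructor
  · -- summability
    intro n
    obtain ⟨K, t, hK0, ht0, ht1, hbd⟩ := core (Real.sqrt R₁ / 2)
      (by have h := Real.sqrt_pos.2 hR₁; linarith) (by
        have h := Real.sqrt_pos.2 hR₁
        linarith)
    apply Summable.of_nonneg_of_le (hf_nonneg n) (hbd n)
    exact ((summable_geometric_of_lt_one ht0.le ht1).mul_left _)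
  · -- uniform bound
    intro R₂ hR₂ hlt
    obtain ⟨K, t, hK0, ht0, ht1, hbd⟩ := core R₂ hR₂ hlt
    refine ⟨K * (1 - t)⁻¹, mul_pos hK0 (inv_pos.2 (by linarith)), fun n => ?_⟩
    have hg : Summable (fun k : ℕ => K * (R₂⁻¹) ^ n * t ^ k) :=
      (summable_geometric_of_lt_one ht0.le ht1).mul_left _
    have hfs : Summable (f n) := Summable.of_nonneg_of_le (hf_nonneg n) (hbd n) hg
    have h1 : (∑' k, f n k) ≤ ∑' k, K * (R₂⁻¹) ^ n * t ^ k :=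
      Summable.tsum_le_tsum (hbd n) hfs hg
    have h2 : (∑' k : ℕ, K * (R₂⁻¹) ^ n * t ^ k) = K * (1 - t)⁻¹ / R₂ ^ n := by
      rw [tsum_mul_left, tsum_geometric_of_lt_one ht0.le ht1, div_eq_mul_inv, ← inv_pow]
      ring
    calc (∑' k, f n k) ≤ _ := h1
      _ = K * (1 - t)⁻¹ / R₂ ^ n := h2
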